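/- Let U be a finite set of workers partitioned into wage buckets B_1, …, B_k such that the wage function w : U → ℝ is constant on each bucket, and let s : U → ℝ be a single-domain skill function. Fix for each bucket B_b a linear ordering of its elements by nonincreasing skill, and for 0 ≤ t ≤ |B_b| let Top_t(B_b) denote the set of the first t workers (the t most skilled) of B_b. If G ⊆ U satisfies ∑_{u∈G} s(u) ≥ Q and ∑_{u∈G} w(u) ≤ C, then the group G' := ⋃_{b=1}^{k} Top_{|G ∩ B_b|}(B_b) also satisfies ∑_{u∈G'} s(u) ≥ Q and ∑_{u∈G'} w(u) ≤ C. In particular, when wages take only k distinct values, the search for a feasible group may be restricted to groups that select, within each bucket, a most-skilled prefix. -/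

import Mathlib

open Finset

private lemma prefix_sum_ge {X : Type*} [DecidableEq X] (s : X → ℝ) :
    ∀ (L : List X), L.Nodup → L.Pairwise (fun x y => s y ≤ s x) →
    ∀ S : Finset X, S ⊆ L.toFinset →
    ∑ x ∈ S, s x ≤ ∑ x ∈ (L.take S.card).toFinset, s x := by
  intro L
  induction L with
  | nil =>
    intro _ _ S hS
    simp only [List.toFinset_nil, Finset.subset_empty] at hS
    subst hS; simp
  | cons a L ih =>
    intro hnd hsort S hS
    rcases List.nodup_cons.mp hnd with ⟨haL, hndL⟩
    rcases List.pairwise_cons.mp hsort with ⟨hmax, hsortL⟩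
    rcases eq_or_ne S ∅ with rfl | hne
    · simp
    have hnemp : S.Nonempty := Finset.nonempty_iff_ne_empty.mpr hne
    have hanotake : ∀ t, a ∉ (L.take t).toFinset := by
      intro t ht
      exact haL ((L.take_sublist t).mem (List.mem_toFinset.mp ht))
    by_cases haS : a ∈ S
    · have hcard : S.card = (S.erase a).card + 1 := (Finset.card_erase_add_one haS).symm
      rw [hcard, List.take_succ_cons, List.toFinset_cons,
        Finset.sum_insert (hanotake _)]
      have hsub : S.erase a ⊆ L.toFinset := by
        intro x hx
        have hxa := Finset.ne_of_mem_erase hx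
        have := hS (Finset.mem_of_mem_erase hx)
        simp only [List.toFinset_cons, Finset.mem_insert] at this
        tauto
      have := ih hndL hsortL (S.erase a) hsub
      have hsum := Finset.add_sum_erase S s haS
      linarith
    · obtain ⟨x, hx⟩ := hnemp
      have hxL : x ∈ L.toFinset := by
        have := hS hx
        simp only [List.toFinset_cons, Finset.mem_insert] at this
        rcases this with rfl | h
        · exact absurd hx haS
        · exact h
      have hxa : s x ≤ s a := hmax x (List.mem_toFinset.mp hxL)
      have hcard : S.card = (S.erase x).card + 1 := (Finset.card_erase_add_one hx).symm
      rw [hcard, List.take_succ_cons, List.toFinset_cons,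
        Finset.sum_insert (hanotake _)]
      have hsub : S.erase x ⊆ L.toFinset := by
        intro y hy
        have hya := Finset.ne_of_mem_erase hy
        have hyS := Finset.mem_of_mem_erase hy
        have := hS hyS
        simp only [List.toFinset_cons, Finset.mem_insert] at this
        rcases this with rfl | h
        · exact absurd hyS haS
        · exact h
      have := ih hndL hsortL (S.erase x) hsub
      have hsum := Finset.add_sum_erase S s hx
      linarith

/-- Prefix optimality in the constant-cost variant (Cons-k-Cost): if the wage
function is constant on each bucket `B b`, and every bucket is enumerated by a
duplicate-free list `L b` sorted by nonincreasing skill, then replacing each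
trace `G ∩ B b` of a feasible group `G` by the same number of most-skilled
workers of that bucket (a prefix of `L b`) again yields a feasible group. -/
theorem cons_k_cost_prefix_feasible {X : Type*} [DecidableEq X]
    (k : ℕ) (U : Finset X) (B : Fin k → Finset X)
    (hdisj : ∀ b b', b ≠ b' → Disjoint (B b) (B b'))
    (hcover : Finset.univ.biUnion B = U)
    (s : X → ℝ) (w : X → ℝ)
    (hwconst : ∀ b, ∀ x ∈ B b, ∀ y ∈ B b, w x = w y)
    (L : Fin k → List X)
    (hnd : ∀ b, (L b).Nodup)
    (htf : ∀ b, (L b).toFinset = B b)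
    (hsort : ∀ b, (L b).Pairwise fun x y => s y ≤ s x)
    (Q C : ℝ) (G : Finset X) (hG : G ⊆ U)
    (hq : Q ≤ ∑ v ∈ G, s v) (hc : (∑ v ∈ G, w v) ≤ C) :
    Q ≤ (∑ v ∈ Finset.univ.biUnion
          (fun b => ((L b).take (G ∩ B b).card).toFinset), s v) ∧
    (∑ v ∈ Finset.univ.biUnion
        (fun b => ((L b).take (G ∩ B b).card).toFinset), w v) ≤ C := by
  set T : Fin k → Finset X := fun b => ((L b).take (G ∩ B b).card).toFinset with hT
  have hTsub : ∀ b, T b ⊆ B b := by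
    intro b x hx
    rw [← htf b]
    exact List.mem_toFinset.mpr (((L b).take_sublist _).mem (List.mem_toFinset.mp hx))
  -- decomposition of G
  have hGdec : G = Finset.univ.biUnion (fun b => G ∩ B b) := by
    ext x
    simp only [Finset.mem_biUnion, Finset.mem_inter, Finset.mem_univ, true_and]
    constructor
    · intro hx
      have : x ∈ Finset.univ.biUnion B := by rw [hcover]; exact hG hx
      obtain ⟨b, -, hb⟩ := Finset.mem_biUnion.mp this
      exact ⟨b, hx, hb⟩
    · rintro ⟨b, hx, -⟩; exact hx
  have hdisjG : (↑(Finset.univ : Finset (Fin k)) : Set (Fin k)).PairwiseDisjoint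
      (fun b => G ∩ B b) := by
    intro b _ b' _ hbb
    exact (hdisj b b' hbb).mono Finset.inter_subset_right Finset.inter_subset_right
  have hdisjT : (↑(Finset.univ : Finset (Fin k)) : Set (Fin k)).PairwiseDisjoint T := by
    intro b _ b' _ hbb
    exact (hdisj b b' hbb).mono (hTsub b) (hTsub b')
  -- per-bucket skill bound
  have hskill : ∀ b, ∑ x ∈ G ∩ B b, s x ≤ ∑ x ∈ T b, s x := by
    intro b
    exact prefix_sum_ge s (L b) (hnd b) (hsort b) (G ∩ B b)
      (by rw [htf b]; exact Finset.inter_subset_right)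
  -- per-bucket wage equality
  have hwage : ∀ b, ∑ x ∈ T b, w x = ∑ x ∈ G ∩ B b, w x := by
    intro b
    have hcardle : (G ∩ B b).card ≤ (L b).length := by
      calc (G ∩ B b).card ≤ (B b).card := Finset.card_le_card Finset.inter_subset_right
        _ = (L b).length := by
            rw [← htf b, List.card_toFinset, List.dedup_eq_self.mpr (hnd b)]
    have hTcard : (T b).card = (G ∩ B b).card := by
      rw [hT]
      simp only
      rw [List.card_toFinset, List.dedup_eq_self.mpr ((hnd b).sublist ((L b).take_sublist _)),
        List.length_take]
      exact Nat.min_eq_left hcardle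
    rcases eq_or_ne (G ∩ B b) ∅ with he | hne
    · rw [he] at hTcard ⊢
      simp only [Finset.card_empty] at hTcard
      rw [Finset.card_eq_zero.mp hTcard]
    · obtain ⟨x0, hx0⟩ := Finset.nonempty_iff_ne_empty.mpr hne
      have hx0B : x0 ∈ B b := (Finset.mem_inter.mp hx0).2
      have h1 : ∑ x ∈ T b, w x = (T b).card • w x0 := by
        rw [← Finset.sum_const]
        exact Finset.sum_congr rfl fun x hx => hwconst b x (hTsub b hx) x0 hx0B
      have h2 : ∑ x ∈ G ∩ B b, w x = (G ∩ B b).card • w x0 := by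
        rw [← Finset.sum_const]
        exact Finset.sum_congr rfl fun x hx =>
          hwconst b x (Finset.mem_inter.mp hx).2 x0 hx0B
      rw [h1, h2, hTcard]
  constructor
  · calc Q ≤ ∑ v ∈ G, s v := hq
      _ = ∑ b, ∑ v ∈ G ∩ B b, s v := by
            conv_lhs => rw [hGdec]
            exact Finset.sum_biUnion hdisjG
      _ ≤ ∑ b, ∑ v ∈ T b, s v := Finset.sum_le_sum fun b _ => hskill b
      _ = ∑ v ∈ Finset.univ.biUnion T, s v := (Finset.sum_biUnion hdisjT).symm
  · calc ∑ v ∈ Finset.univ.biUnion T, w v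
        = ∑ b, ∑ v ∈ T b, w v := Finset.sum_biUnion hdisjT
      _ = ∑ b, ∑ v ∈ G ∩ B b, w v := Finset.sum_congr rfl fun b _ => hwage b
      _ = ∑ v ∈ G, w v := by
            conv_rhs => rw [hGdec]
            exact (Finset.sum_biUnion hdisjG).symm
      _ ≤ C := hc
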